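/- Let S = {(0,0), (0,1), (0,2), (1,0), (1,−1), (1,−2)} ⊆ ℝ². Then ⋃_{i ≥ 0} Tⁱ(S) equals the set ℚ² of all points of ℝ² with both coordinates rational. -/

import Mathlib

open Set Filter

noncomputable section

/-- The line through two points in the plane `ℝ × ℝ`. -/
def line (a b : ℝ × ℝ) : AffineSubspace ℝ (ℝ × ℝ) := affineSpan ℝ {a, b}

/-- The intersection operation `T`: the set of all intersection points of pairs of
distinct lines through pairs of distinct points of `S`. -/
def interT (S : Set (ℝ × ℝ)) : Set (ℝ × ℝ) :=
  {x | ∃ a ∈ S, ∃ b ∈ S, ∃ c ∈ S, ∃ d ∈ S,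
    a ≠ b ∧ c ≠ d ∧ line a b ≠ line c d ∧ x ∈ line a b ∧ x ∈ line c d}

/-- The set of points of `ℝ × ℝ` with both coordinates rational. -/
def ratPoints : Set (ℝ × ℝ) := {p | ∃ a b : ℚ, p = ((a : ℝ), (b : ℝ))}

def S0 : Set (ℝ × ℝ) := {((0 : ℝ), (0 : ℝ)), (0, 1), (0, 2), (1, 0), (1, -1), (1, -2)}

def U : Set (ℝ × ℝ) := ⋃ i, interT^[i] S0

lemma mem_line_iff {a b x : ℝ×ℝ} :
    x ∈ line a b ↔ ∃ t : ℝ, x.1 = a.1 + t*(b.1-a.1) ∧ x.2 = a.2 + t*(b.2-a.2) := by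
  have h : x ∈ line a b ↔ ∃ r : ℝ, r • (b -ᵥ a) = x -ᵥ a := by
    rw [line, show x = (x -ᵥ a) +ᵥ a by simp, vadd_left_mem_affineSpan_pair]
    simp
  rw [h]
  constructor
  · rintro ⟨r, hr⟩
    rw [Prod.ext_iff] at hr
    simp [Prod.smul_def] at hr
    exact ⟨r, by constructor <;> [linarith [hr.1]; linarith [hr.2]]⟩
  · rintro ⟨t, h1, h2⟩
    refine ⟨t, ?_⟩
    rw [Prod.ext_iff]
    constructor <;> simp [h1, h2] <;> ring

lemma fst_of_mem_vert {v r r' : ℝ} {z : ℝ×ℝ} (h : z ∈ line (v,r) (v,r')) : z.1 = v := by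
  rcases mem_line_iff.1 h with ⟨t, h1, _⟩
  simp at h1; linarith

lemma snd_of_mem_cross {a c : ℝ} {z : ℝ×ℝ} (h : z ∈ line (0,a) (1,c)) :
    z.2 = a + z.1*(c-a) := by
  rcases mem_line_iff.1 h with ⟨t, h1, h2⟩
  simp at h1 h2; rw [h1]; linarith

lemma interT_mono {S S' : Set (ℝ×ℝ)} (h : S ⊆ S') : interT S ⊆ interT S' := by
  rintro x ⟨a, ha, b, hb, c, hc, d, hd, rest⟩
  exact ⟨a, h ha, b, h hb, c, h hc, d, h hd, rest⟩

lemma S0_subset_interT : S0 ⊆ interT S0 := by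
  have l1 : ∀ y y' c : ℝ, y ≠ y' → line ((0:ℝ),y) (0,y') ≠ line ((0:ℝ),y) (1,c) := by
    intro y y' c _ h
    have hm : ((1:ℝ),c) ∈ line ((0:ℝ),y) ((1:ℝ),c) := right_mem_affineSpan_pair ℝ _ _
    rw [← h] at hm
    have := fst_of_mem_vert hm
    norm_num at this
  have l2 : ∀ y y' c : ℝ, y ≠ y' → line ((1:ℝ),y) (1,y') ≠ line ((1:ℝ),y) (0,c) := by
    intro y y' c _ h
    have hm : ((0:ℝ),c) ∈ line ((1:ℝ),y) ((0:ℝ),c) := right_mem_affineSpan_pair ℝ _ _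
    rw [← h] at hm
    have := fst_of_mem_vert hm
    norm_num at this
  have key : ∀ p q r : ℝ×ℝ, p ∈ S0 → q ∈ S0 → r ∈ S0 → p ≠ q → p ≠ r →
      line p q ≠ line p r → p ∈ interT S0 := by
    intro p q r hp hq hr hpq hpr hl
    exact ⟨p, hp, q, hq, p, hp, r, hr, hpq, hpr, hl,
      left_mem_affineSpan_pair ℝ p q, left_mem_affineSpan_pair ℝ p r⟩
  intro p hp
  simp only [S0, mem_insert_iff, mem_singleton_iff] at hp
  rcases hp with h|h|h|h|h|h <;> subst h
  · exact key _ ((0:ℝ),(1:ℝ)) ((1:ℝ),(0:ℝ)) (by simp [S0]) (by simp [S0]) (by simp [S0])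
      (by simp [Prod.ext_iff]) (by simp [Prod.ext_iff]) (l1 0 1 0 (by norm_num))
  · exact key _ ((0:ℝ),(0:ℝ)) ((1:ℝ),(0:ℝ)) (by simp [S0]) (by simp [S0]) (by simp [S0])
      (by simp [Prod.ext_iff]) (by simp [Prod.ext_iff]) (l1 1 0 0 (by norm_num))
  · exact key _ ((0:ℝ),(0:ℝ)) ((1:ℝ),(0:ℝ)) (by simp [S0]) (by simp [S0]) (by simp [S0])
      (by simp [Prod.ext_iff]) (by simp [Prod.ext_iff]) (l1 2 0 0 (by norm_num))
  · exact key _ ((1:ℝ),(-1:ℝ)) ((0:ℝ),(0:ℝ)) (by simp [S0]) (by simp [S0]) (by simp [S0])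
      (by simp [Prod.ext_iff]) (by simp [Prod.ext_iff]) (l2 0 (-1) 0 (by norm_num))
  · exact key _ ((1:ℝ),(0:ℝ)) ((0:ℝ),(0:ℝ)) (by simp [S0]) (by simp [S0]) (by simp [S0])
      (by simp [Prod.ext_iff]) (by simp [Prod.ext_iff]) (l2 (-1) 0 0 (by norm_num))
  · exact key _ ((1:ℝ),(0:ℝ)) ((0:ℝ),(0:ℝ)) (by simp [S0]) (by simp [S0]) (by simp [S0])
      (by simp [Prod.ext_iff]) (by simp [Prod.ext_iff]) (l2 (-2) 0 0 (by norm_num))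

lemma iter_mono : ∀ i j, i ≤ j → interT^[i] S0 ⊆ interT^[j] S0 := by
  have step : ∀ i, interT^[i] S0 ⊆ interT^[i+1] S0 := by
    intro i
    induction i with
    | zero => simpa using S0_subset_interT
    | succ n ih =>
      rw [Function.iterate_succ_apply', Function.iterate_succ_apply']
      exact interT_mono ih
  intro i j hij
  induction j with
  | zero => simp_all
  | succ n ih =>
    rcases Nat.lt_or_ge i (n+1) with h|h
    · exact (ih (Nat.lt_succ_iff.mp h)).trans (step n)
    · have : i = n+1 := le_antisymm hij h
      subst this; exact subset_rfl

lemma iter_subset_U (i : ℕ) : interT^[i] S0 ⊆ U := subset_iUnion (fun i => interT^[i] S0) i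

lemma S0_subset_U : S0 ⊆ U := iter_subset_U 0

lemma U_closed {a b c d x : ℝ×ℝ} (ha : a ∈ U) (hb : b ∈ U) (hc : c ∈ U) (hd : d ∈ U)
    (hab : a ≠ b) (hcd : c ≠ d) (hll : line a b ≠ line c d)
    (h1 : x ∈ line a b) (h2 : x ∈ line c d) : x ∈ U := by
  rcases mem_iUnion.1 ha with ⟨i, hi⟩
  rcases mem_iUnion.1 hb with ⟨j, hj⟩
  rcases mem_iUnion.1 hc with ⟨k, hk⟩
  rcases mem_iUnion.1 hd with ⟨l, hl⟩
  set n := max (max i j) (max k l) with hn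
  apply iter_subset_U (n+1)
  rw [Function.iterate_succ_apply']
  exact ⟨a, iter_mono i n (le_max_of_le_left (le_max_left _ _)) hi,
    b, iter_mono j n (le_max_of_le_left (le_max_right _ _)) hj,
    c, iter_mono k n (le_max_of_le_right (le_max_left _ _)) hk,
    d, iter_mono l n (le_max_of_le_right (le_max_right _ _)) hl,
    hab, hcd, hll, h1, h2⟩

lemma vert_mem {v r r' y : ℝ} (h : r ≠ r') : ((v,y) : ℝ×ℝ) ∈ line (v,r) (v,r') := by
  rw [mem_line_iff]
  refine ⟨(y - r)/(r' - r), by simp, ?_⟩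
  simp only
  field_simp [sub_ne_zero.2 (Ne.symm h)]; ring

lemma meetV {v r r' : ℝ} (hr : ((v,r) : ℝ×ℝ) ∈ U) (hr' : ((v,r') : ℝ×ℝ) ∈ U) (hrr : r ≠ r')
    {P Q : ℝ×ℝ} (hP : P ∈ U) (hQ : Q ∈ U) (hPQ : P.1 ≠ Q.1)
    {y : ℝ} (hy : y*(Q.1-P.1) = P.2*(Q.1-P.1) + (v-P.1)*(Q.2-P.2)) :
    ((v,y) : ℝ×ℝ) ∈ U := by
  have hQP : Q.1 - P.1 ≠ 0 := sub_ne_zero.2 (Ne.symm hPQ)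
  apply U_closed hr hr' hP hQ
  · intro h; rw [Prod.ext_iff] at h; exact hrr h.2
  · intro h; exact hPQ (by rw [h])
  · intro h
    have h1 : P ∈ line (v,r) (v,r') := h ▸ left_mem_affineSpan_pair ℝ P Q
    have h2 : Q ∈ line (v,r) (v,r') := h ▸ right_mem_affineSpan_pair ℝ P Q
    exact hPQ ((fst_of_mem_vert h1).trans (fst_of_mem_vert h2).symm)
  · exact vert_mem hrr
  · rw [mem_line_iff]
    refine ⟨(v - P.1)/(Q.1 - P.1), ?_, ?_⟩
    · simp only; field_simp; ring
    · simp only; field_simp; linarith [hy]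

lemma meetH {P Q : ℝ×ℝ} (hP : P ∈ U) (hQ : Q ∈ U) (hPQ : P.2 ≠ Q.2)
    {x : ℝ} (hx : x*(Q.2-P.2) = P.1*(Q.2-P.2) - P.2*(Q.1-P.1)) :
    ((x,(0:ℝ)) : ℝ×ℝ) ∈ U := by
  have hQP : Q.2 - P.2 ≠ 0 := sub_ne_zero.2 (Ne.symm hPQ)
  have hz : ((0:ℝ),(0:ℝ)) ∈ U := S0_subset_U (by simp [S0])
  have ho : ((1:ℝ),(0:ℝ)) ∈ U := S0_subset_U (by simp [S0])
  apply U_closed hz ho hP hQ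
  · simp [Prod.ext_iff]
  · intro h; exact hPQ (by rw [h])
  · intro h
    have h1 : P ∈ line ((0:ℝ),(0:ℝ)) ((1:ℝ),(0:ℝ)) := h ▸ left_mem_affineSpan_pair ℝ P Q
    have h2 : Q ∈ line ((0:ℝ),(0:ℝ)) ((1:ℝ),(0:ℝ)) := h ▸ right_mem_affineSpan_pair ℝ P Q
    have e1 := snd_of_mem_cross h1
    have e2 := snd_of_mem_cross h2
    simp at e1 e2
    exact hPQ (e1.trans e2.symm)
  · rw [mem_line_iff]; exact ⟨x, by simp⟩
  · rw [mem_line_iff]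
    refine ⟨(0 - P.2)/(Q.2 - P.2), ?_, ?_⟩
    · simp only; field_simp; nlinarith [hx]
    · simp only; field_simp; ring

lemma crossL {a c b d : ℝ} (ha : ((0:ℝ),a) ∈ U) (hc : ((1:ℝ),c) ∈ U)
    (hb : ((0:ℝ),b) ∈ U) (hd : ((1:ℝ),d) ∈ U) (hs : c - a ≠ d - b)
    {x y : ℝ} (hx : x*((c-a)-(d-b)) = b - a) (hy : y = a + x*(c-a)) :
    ((x,y) : ℝ×ℝ) ∈ U := by
  have hden : (c-a)-(d-b) ≠ 0 := sub_ne_zero.2 hs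
  apply U_closed ha hc hb hd
  · simp [Prod.ext_iff]
  · simp [Prod.ext_iff]
  · intro h
    have h1 : ((0:ℝ),b) ∈ line ((0:ℝ),a) ((1:ℝ),c) := h ▸ left_mem_affineSpan_pair ℝ _ _
    have h2 : ((1:ℝ),d) ∈ line ((0:ℝ),a) ((1:ℝ),c) := h ▸ right_mem_affineSpan_pair ℝ _ _
    have e1 := snd_of_mem_cross h1
    have e2 := snd_of_mem_cross h2
    simp at e1 e2
    apply hs; rw [e1, e2]
  · rw [mem_line_iff]
    exact ⟨x, by simp [hy]⟩
  · rw [mem_line_iff]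
    refine ⟨x, by simp, ?_⟩
    simp only [hy]
    have : x*(d-b) = x*(c-a) - (b-a) := by linarith [hx]
    nlinarith [this]

def A (y : ℝ) : Prop := ((0:ℝ), y) ∈ U
def B (y : ℝ) : Prop := ((1:ℝ), y) ∈ U
def XX (x : ℝ) : Prop := ((x, (0:ℝ)) : ℝ×ℝ) ∈ U
def C (y : ℝ) : Prop := ((2:ℝ), y) ∈ U

lemma hA0 : A 0 := S0_subset_U (by simp [S0])
lemma hA1 : A 1 := S0_subset_U (by simp [S0])
lemma hA2 : A 2 := S0_subset_U (by simp [S0])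
lemma hB0 : B 0 := S0_subset_U (by simp [S0])
lemma hBm1 : B (-1) := S0_subset_U (by simp [S0])
lemma hBm2 : B (-2) := S0_subset_U (by simp [S0])

lemma mB {a x : ℝ} (ha : A a) (hx : XX x) (hx0 : x ≠ 0) {y : ℝ}
    (hy : y * x = a * (x - 1)) : B y := by
  refine meetV hB0 hBm1 (by norm_num) ha hx (by simpa using (Ne.symm hx0)) ?_
  simp only
  ring_nf
  ring_nf at hy
  linarith

lemma mA {c x : ℝ} (hc : B c) (hx : XX x) (hx1 : x ≠ 1) {y : ℝ}
    (hy : y * (x - 1) = c * x) : A y := by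
  refine meetV hA0 hA1 (by norm_num) hc hx (by simpa using (Ne.symm hx1)) ?_
  simp only
  ring_nf
  ring_nf at hy
  linarith

lemma mX {a c : ℝ} (ha : A a) (hc : B c) (hac : a ≠ c) {x : ℝ}
    (hx : x * (c - a) = -a) : XX x := by
  refine meetH ha hc (by simpa using hac) ?_
  simp only
  ring_nf
  ring_nf at hx
  linarith

lemma X12 : XX (1/2) := mX hA1 hBm1 (by norm_num) (by norm_num)
lemma X13 : XX (1/3) := mX hA1 hBm2 (by norm_num) (by norm_num)

lemma negAB {a : ℝ} (ha : A a) {y : ℝ} (hy : y = -a) : B y :=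
  mB ha X12 (by norm_num) (by rw [hy]; ring)

lemma halfBA {c : ℝ} (hc : B c) {y : ℝ} (hy : y = -c/2) : A y :=
  mA hc X13 (by norm_num) (by rw [hy]; ring)

lemma Pm12 : (((-1:ℝ),(2:ℝ)) : ℝ×ℝ) ∈ U :=
  crossL (a := 0) (c := -2) (b := 1) (d := 0) hA0 hBm2 hA1 hB0
    (by norm_num) (by norm_num) (by norm_num)

lemma hB2 : B 2 := by
  refine meetV hB0 hBm1 (by norm_num) Pm12 hA2 (by norm_num) ?_
  norm_num

lemma Xm1 : XX (-1) := mX hA1 hB2 (by norm_num) (by norm_num)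

lemma twoAB {a : ℝ} (ha : A a) {y : ℝ} (hy : y = 2*a) : B y :=
  mB ha Xm1 (by norm_num) (by rw [hy]; ring)

lemma negA {a : ℝ} (ha : A a) {y : ℝ} (hy : y = -a) : A y :=
  halfBA (twoAB ha rfl) (by rw [hy]; ring)

lemma hA12 : A (1/2) := halfBA (negAB hA1 rfl) (by norm_num)
lemma hB12 : B (1/2) := negAB (negA hA12 rfl) (by norm_num)

lemma pt2m2 : (((2:ℝ),(-2:ℝ)) : ℝ×ℝ) ∈ U :=
  crossL (a := 0) (c := -1) (b := 2) (d := 0) hA0 hBm1 hA2 hB0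
    (by norm_num) (by norm_num) (by norm_num)

lemma pt20 : (((2:ℝ),(0:ℝ)) : ℝ×ℝ) ∈ U :=
  crossL (a := 0) (c := 0) (b := 1) (d := 1/2) hA0 hB0 hA1 hB12
    (by norm_num) (by norm_num) (by norm_num)

lemma toC {a c : ℝ} (ha : A a) (hc : B c) {y : ℝ} (hy : y = 2*c - a) : C y := by
  refine meetV pt20 pt2m2 (by norm_num) ha hc (by norm_num) ?_
  simp only [hy]; ring

lemma fromC {e c : ℝ} (he : C e) (hc : B c) {y : ℝ} (hy : y = 2*c - e) : A y := by
  refine meetV hA0 hA1 (by norm_num) he hc (by norm_num) ?_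
  simp only [hy]; ring

lemma addOneA {a : ℝ} (ha : A a) : A (a + 1) :=
  fromC (toC ha hB0 rfl) hB12 (by ring)

lemma subOneA {a : ℝ} (ha : A a) : A (a - 1) :=
  fromC (toC ha hB12 rfl) hB0 (by ring)

lemma intA : ∀ n : ℤ, A (n : ℝ) := by
  intro n
  induction n using Int.induction_on with
  | zero => exact_mod_cast hA0
  | succ k ih => push_cast; exact addOneA ih
  | pred k ih => push_cast at ih ⊢; exact subOneA ih

lemma intB (n : ℤ) : B (n : ℝ) := negAB (intA (-n)) (by push_cast; ring)

lemma ratX (x : ℚ) (hx0 : x ≠ 0) : XX (x : ℝ) := by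
  have hden : ((x.den : ℝ)) ≠ 0 := Nat.cast_ne_zero.2 x.den_nz
  have hkey : (x : ℝ) * (x.den : ℝ) = (x.num : ℝ) := by
    rw [Rat.cast_def]; field_simp
  have hc : B ((x.num : ℝ) - (x.den : ℝ)) := by
    have := intB (x.num - (x.den : ℤ)); push_cast at this; exact this
  refine mX (intA x.num) hc ?_ ?_
  · intro h
    apply hden; linarith
  · linear_combination -hkey

lemma ratA (q : ℚ) : A (q : ℝ) := by
  by_cases h0 : q = 0
  · subst h0; exact_mod_cast hA0
  by_cases h1 : q = -1
  · subst h1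
    have := intA (-1); push_cast at this; exact_mod_cast this
  have hq1 : (1:ℝ) + (q:ℝ) ≠ 0 := by
    intro h
    apply h1
    have : (q:ℝ) = ((-1 : ℚ) : ℝ) := by push_cast; linarith
    exact_mod_cast this
  have hq1' : (1:ℚ) + q ≠ 0 := by
    intro h; apply h1; linarith
  have hxq0 : q/(1+q) ≠ 0 := div_ne_zero h0 hq1'
  have hX := ratX (q/(1+q)) hxq0
  have hcast : ((q/(1+q) : ℚ) : ℝ) = (q:ℝ)/(1+(q:ℝ)) := by push_cast; ring
  rw [hcast] at hX
  refine mA hBm1 hX ?_ ?_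
  · intro h
    rw [div_eq_one_iff_eq hq1] at h
    linarith
  · field_simp; ring

lemma ratB (q : ℚ) : B (q : ℝ) := negAB (ratA (-q)) (by push_cast; ring)

lemma ratPt (p q : ℚ) : (((p:ℝ), (q:ℝ)) : ℝ×ℝ) ∈ U := by
  have ha := ratA (q - p)
  have hc := ratB (q - p + 1)
  have hb := ratA (q - 2*p)
  have hd := ratB (q - 2*p + 2)
  push_cast at ha hc hb hd
  exact crossL ha hc hb hd (by intro h; ring_nf at h ; linarith) (by ring) (by ring)


lemma line_eq_of_det {a b c d x : ℝ×ℝ} (hab : a ≠ b) (hcd : c ≠ d)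
    (h1 : x ∈ line a b) (h2 : x ∈ line c d)
    (hD : (b.1-a.1)*(d.2-c.2) - (b.2-a.2)*(d.1-c.1) = 0) : line a b = line c d := by
  obtain ⟨t, ht1, ht2⟩ := mem_line_iff.1 h1
  obtain ⟨s, hs1, hs2⟩ := mem_line_iff.1 h2
  have E1 : a.1 + t*(b.1-a.1) = c.1 + s*(d.1-c.1) := by rw [← ht1, ← hs1]
  have E2 : a.2 + t*(b.2-a.2) = c.2 + s*(d.2-c.2) := by rw [← ht2, ← hs2]
  have hu : b.1 - a.1 ≠ 0 ∨ b.2 - a.2 ≠ 0 := by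
    by_contra h
    push_neg at h
    exact hab (Prod.ext (by linarith [h.1]) (by linarith [h.2]))
  obtain ⟨μ, hv1, hv2⟩ : ∃ μ : ℝ, d.1-c.1 = μ*(b.1-a.1) ∧ d.2-c.2 = μ*(b.2-a.2) := by
    rcases hu with h|h
    · refine ⟨(d.1-c.1)/(b.1-a.1), by field_simp, ?_⟩
      field_simp
      linear_combination hD
    · refine ⟨(d.2-c.2)/(b.2-a.2), ?_, by field_simp⟩
      field_simp
      linear_combination -hD
  have hμ0 : μ ≠ 0 := by
    intro h
    rw [h] at hv1 hv2
    exact hcd (Prod.ext (by simp at hv1; linarith) (by simp at hv2; linarith))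
  apply le_antisymm
  · rw [line, affineSpan_le]
    simp only [Set.insert_subset_iff, Set.singleton_subset_iff, SetLike.mem_coe]
    constructor
    · show _ ∈ line _ _
      rw [mem_line_iff]
      refine ⟨s - t/μ, ?_, ?_⟩
      · rw [hv1, show (s - t/μ)*(μ*(b.1-a.1)) = (s*μ - t)*(b.1-a.1) by field_simp]
        linear_combination E1 + s*hv1
      · rw [hv2, show (s - t/μ)*(μ*(b.2-a.2)) = (s*μ - t)*(b.2-a.2) by field_simp]
        linear_combination E2 + s*hv2
    · show _ ∈ line _ _
      rw [mem_line_iff]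
      refine ⟨s - t/μ + 1/μ, ?_, ?_⟩
      · rw [hv1, show (s - t/μ + 1/μ)*(μ*(b.1-a.1)) = (s*μ - t + 1)*(b.1-a.1) by
          field_simp]
        linear_combination E1 + s*hv1
      · rw [hv2, show (s - t/μ + 1/μ)*(μ*(b.2-a.2)) = (s*μ - t + 1)*(b.2-a.2) by
          field_simp]
        linear_combination E2 + s*hv2
  · rw [line, affineSpan_le]
    simp only [Set.insert_subset_iff, Set.singleton_subset_iff, SetLike.mem_coe]
    constructor
    · show _ ∈ line _ _
      rw [mem_line_iff]
      exact ⟨t - s*μ, by linear_combination -E1 - s*hv1, by linear_combination -E2 - s*hv2⟩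
    · show _ ∈ line _ _
      rw [mem_line_iff]
      exact ⟨t - s*μ + μ, by linear_combination -E1 + (1-s)*hv1,
        by linear_combination -E2 + (1-s)*hv2⟩

lemma rat_line_inter {a b c d x : ℝ×ℝ}
    (ha : a ∈ ratPoints) (hb : b ∈ ratPoints) (hc : c ∈ ratPoints) (hd : d ∈ ratPoints)
    (hab : a ≠ b) (hcd : c ≠ d) (hll : line a b ≠ line c d)
    (h1 : x ∈ line a b) (h2 : x ∈ line c d) : x ∈ ratPoints := by
  obtain ⟨a1, a2, rfl⟩ := ha
  obtain ⟨b1, b2, rfl⟩ := hb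
  obtain ⟨c1, c2, rfl⟩ := hc
  obtain ⟨d1, d2, rfl⟩ := hd
  obtain ⟨t, ht1, ht2⟩ := mem_line_iff.1 h1
  obtain ⟨s, hs1, hs2⟩ := mem_line_iff.1 h2
  simp only at ht1 ht2 hs1 hs2
  have E1 : (a1:ℝ) + t*((b1:ℝ)-(a1:ℝ)) = (c1:ℝ) + s*((d1:ℝ)-(c1:ℝ)) := by
    rw [← ht1, ← hs1]
  have E2 : (a2:ℝ) + t*((b2:ℝ)-(a2:ℝ)) = (c2:ℝ) + s*((d2:ℝ)-(c2:ℝ)) := by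
    rw [← ht2, ← hs2]
  by_cases hD : (b1-a1)*(d2-c2) - (b2-a2)*(d1-c1) = 0
  · exfalso
    apply hll
    apply line_eq_of_det hab hcd h1 h2
    simp only
    exact_mod_cast congrArg (Rat.cast : ℚ → ℝ) hD
  · have hDR : ((b1:ℝ)-a1)*((d2:ℝ)-c2) - ((b2:ℝ)-a2)*((d1:ℝ)-c1) ≠ 0 := by
      intro h
      apply hD
      exact_mod_cast h
    set N : ℚ := (c1-a1)*(d2-c2) - (c2-a2)*(d1-c1) with hN
    have hT : t * (((b1:ℝ)-a1)*((d2:ℝ)-c2) - ((b2:ℝ)-a2)*((d1:ℝ)-c1)) = (N:ℝ) := by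
      push_cast [hN]
      linear_combination ((d2:ℝ)-c2)*E1 - ((d1:ℝ)-c1)*E2
    have hts : t = (N:ℝ) / (((b1:ℝ)-a1)*((d2:ℝ)-c2) - ((b2:ℝ)-a2)*((d1:ℝ)-c1)) := by
      field_simp
      linarith [hT]
    set D : ℚ := (b1-a1)*(d2-c2) - (b2-a2)*(d1-c1) with hDq
    have hcast : ((D:ℚ):ℝ) = ((b1:ℝ)-a1)*((d2:ℝ)-c2) - ((b2:ℝ)-a2)*((d1:ℝ)-c1) := by
      push_cast [hDq]; ring
    refine ⟨a1 + N/D*(b1-a1), a2 + N/D*(b2-a2), ?_⟩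
    have hx1 : x.1 = ((a1 + N/D*(b1-a1) : ℚ) : ℝ) := by
      rw [ht1, hts]
      push_cast
      rw [hcast]
    have hx2 : x.2 = ((a2 + N/D*(b2-a2) : ℚ) : ℝ) := by
      rw [ht2, hts]
      push_cast
      rw [hcast]
    exact Prod.ext hx1 hx2

lemma U_subset_rat : U ⊆ ratPoints := by
  refine iUnion_subset fun i => ?_
  induction i with
  | zero =>
    intro p hp
    simp only [Function.iterate_zero, id_eq, S0, mem_insert_iff, mem_singleton_iff] at hp
    rcases hp with rfl|rfl|rfl|rfl|rfl|rfl
    · exact ⟨0, 0, by norm_num⟩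
    · exact ⟨0, 1, by norm_num⟩
    · exact ⟨0, 2, by norm_num⟩
    · exact ⟨1, 0, by norm_num⟩
    · exact ⟨1, -1, by norm_num⟩
    · exact ⟨1, -2, by norm_num⟩
  | succ n ih =>
    rw [Function.iterate_succ_apply']
    rintro x ⟨a, ha, b, hb, c, hc, d, hd, hab, hcd, hll, h1, h2⟩
    exact rat_line_inter (ih ha) (ih hb) (ih hc) (ih hd) hab hcd hll h1 h2

/-- Iterating `T` on `{(0,0), (0,1), (0,2), (1,0), (1,-1), (1,-2)}` generates all of `ℚ²`. -/
theorem iUnion_interT_sixPoints'_eq_ratPoints :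
    (⋃ i, interT^[i]
      ({((0 : ℝ), (0 : ℝ)), (0, 1), (0, 2), (1, 0), (1, -1), (1, -2)} : Set (ℝ × ℝ))) =
      ratPoints := by
  have hU : (⋃ i, interT^[i]
      ({((0 : ℝ), (0 : ℝ)), (0, 1), (0, 2), (1, 0), (1, -1), (1, -2)} : Set (ℝ × ℝ))) = U := rfl
  rw [hU]
  apply Set.Subset.antisymm U_subset_rat
  rintro p ⟨qa, qb, rfl⟩
  exact ratPt qa qb
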